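/- Assume there exists v ∈ ℤ^n with ⟨p_r, v⟩ = 0 for all r ≤ k and ⟨q_j, v⟩ > 0 for all j > k (i.e. τ is a face of σ). Then a point x is invertible with respect to * (there exists a point y with x*y = y*x = x_τ) if and only if x(u) ≠ 0 for every u ∈ S with ⟨p_r, u⟩ = 0 for all r = 1, …, k. (This is the statement of Theorem 1 that the group of invertible elements of the root monoid X_σ coincides with the open toric subvariety X_τ.) -/

import Mathlib

open Finset

def pairZ {n : ℕ} (v u : Fin n → ℤ) : ℤ := ∑ i, v i * u i

def InS {n m : ℕ} (q : Fin m → Fin n → ℤ) (u : Fin n → ℤ) : Prop :=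
  ∀ j, 0 ≤ pairZ (q j) u

def IsPoint {n m : ℕ} {K : Type*} [Field K] (q : Fin m → Fin n → ℤ)
    (x : (Fin n → ℤ) → K) : Prop :=
  x 0 = 1 ∧ ∀ u v : Fin n → ℤ, InS q u → InS q v → x (u + v) = x u * x v

def Compatible {n m k : ℕ} (hkm : k ≤ m) (q : Fin m → Fin n → ℤ)
    (e : Fin k → Fin n → ℤ) : Prop :=
  (∀ r s : Fin k, pairZ (q (Fin.castLE hkm s)) (e r) = if r = s then -1 else 0) ∧
  (∀ (r : Fin k) (j : Fin m), k ≤ (j : ℕ) → 0 ≤ pairZ (q j) (e r))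

noncomputable def rmul {n m k : ℕ} {K : Type*} [Field K] (hkm : k ≤ m)
    (q : Fin m → Fin n → ℤ) (e1 e2 : Fin k → Fin n → ℤ)
    (x y : (Fin n → ℤ) → K) : (Fin n → ℤ) → K :=
  fun u =>
    ∑ i ∈ Fintype.piFinset (fun r : Fin k =>
        Finset.range ((pairZ (q (Fin.castLE hkm r)) u).toNat + 1)),
      (∏ r : Fin k, ((pairZ (q (Fin.castLE hkm r)) u).toNat.choose (i r) : K)) *
        x (u + ∑ r : Fin k, (i r : ℤ) • e2 r) *
        y (u + ∑ r : Fin k, (pairZ (q (Fin.castLE hkm r)) u - (i r : ℤ)) • e1 r)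

noncomputable def xtau {n m k : ℕ} (K : Type*) [Field K] (hkm : k ≤ m)
    (q : Fin m → Fin n → ℤ) : (Fin n → ℤ) → K :=
  fun u => if ∀ r : Fin k, pairZ (q (Fin.castLE hkm r)) u = 0 then 1 else 0




lemma pairZ_zero' {n : ℕ} (v : Fin n → ℤ) : pairZ v 0 = 0 := by simp [pairZ]

lemma pairZ_add' {n : ℕ} (v u w : Fin n → ℤ) : pairZ v (u + w) = pairZ v u + pairZ v w := by
  simp [pairZ, mul_add, Finset.sum_add_distrib]

lemma pairZ_smul' {n : ℕ} (v : Fin n → ℤ) (c : ℤ) (u : Fin n → ℤ) :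
    pairZ v (c • u) = c * pairZ v u := by
  simp [pairZ, Finset.mul_sum, mul_left_comm]

lemma pairZ_sum' {n : ℕ} {ι : Type*} (v : Fin n → ℤ) (s : Finset ι) (f : ι → Fin n → ℤ) :
    pairZ v (∑ i ∈ s, f i) = ∑ i ∈ s, pairZ v (f i) := by
  classical
  induction s using Finset.induction with
  | empty => simp [pairZ]
  | insert a s h ih => simp [Finset.sum_insert h, pairZ_add', ih]

lemma sum_smul_add' {n k : ℕ} (a b : Fin k → ℤ) (e : Fin k → Fin n → ℤ) :
    (∑ r, a r • e r) + (∑ r, b r • e r) = ∑ r, (a r + b r) • e r := by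
  rw [← Finset.sum_add_distrib]
  exact Finset.sum_congr rfl fun r _ => (add_smul _ _ _).symm

lemma alt_sum1 {K : Type*} [Field K] (d : ℕ) :
    ∑ j ∈ Finset.range (d + 1), ((d.choose j : K) * (-1) ^ j) = 0 ^ d := by
  calc ∑ j ∈ Finset.range (d + 1), ((d.choose j : K) * (-1) ^ j)
      = ∑ j ∈ Finset.range (d + 1), ((-1 : K)^j * 1^(d-j) * (d.choose j)) := by
        apply Finset.sum_congr rfl; intros; ring
    _ = ((-1) + 1 : K)^d := (add_pow _ _ _).symm
    _ = 0 ^ d := by norm_num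

lemma alt_sum2 {K : Type*} [Field K] (d : ℕ) :
    ∑ j ∈ Finset.range (d + 1), ((d.choose j : K) * (-1) ^ (d - j)) = 0 ^ d := by
  calc ∑ j ∈ Finset.range (d + 1), ((d.choose j : K) * (-1) ^ (d - j))
      = ∑ j ∈ Finset.range (d + 1), ((1 : K)^j * (-1)^(d-j) * (d.choose j)) := by
        apply Finset.sum_congr rfl; intros; ring
    _ = (1 + (-1) : K)^d := (add_pow _ _ _).symm
    _ = 0 ^ d := by norm_num

lemma pair_shift {n m k : ℕ} (hkm : k ≤ m) (q : Fin m → Fin n → ℤ) (e : Fin k → Fin n → ℤ)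
    (he : Compatible hkm q e) (u : Fin n → ℤ) (c : Fin k → ℤ) (s : Fin k) :
    pairZ (q (Fin.castLE hkm s)) (u + ∑ r, c r • e r)
      = pairZ (q (Fin.castLE hkm s)) u - c s := by
  rw [pairZ_add', pairZ_sum']
  simp only [pairZ_smul', he.1, mul_ite, mul_neg_one, mul_zero]
  rw [Finset.sum_ite_eq' Finset.univ s (fun r => -(c r))]
  simp [sub_eq_add_neg]

lemma InS_shift {n m k : ℕ} (hkm : k ≤ m) (q : Fin m → Fin n → ℤ) (e : Fin k → Fin n → ℤ)
    (he : Compatible hkm q e) (u : Fin n → ℤ) (hu : InS q u)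
    (c : Fin k → ℤ) (hc0 : ∀ r, 0 ≤ c r)
    (hc1 : ∀ s, c s ≤ pairZ (q (Fin.castLE hkm s)) u) :
    InS q (u + ∑ r, c r • e r) := by
  intro j
  by_cases hj : (j : ℕ) < k
  · have hq : q j = q (Fin.castLE hkm ⟨j.1, hj⟩) := by rfl
    rw [hq, pair_shift hkm q e he]
    have := hc1 ⟨j.1, hj⟩
    have := hu j
    rw [hq] at this
    omega
  · rw [pairZ_add', pairZ_sum']
    refine add_nonneg (hu j) (Finset.sum_nonneg fun r _ => ?_)
    rw [pairZ_smul']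
    exact mul_nonneg (hc0 r) (he.2 r j (le_of_not_gt hj))

noncomputable def myY {n m k : ℕ} {K : Type*} [Field K] (hkm : k ≤ m)
    (q : Fin m → Fin n → ℤ) (e1 e2 : Fin k → Fin n → ℤ) (x : (Fin n → ℤ) → K) :
    (Fin n → ℤ) → K :=
  fun u => (-1 : K) ^ (∑ r : Fin k, (pairZ (q (Fin.castLE hkm r)) u).toNat)
      * x u * (x (u + ∑ r : Fin k, pairZ (q (Fin.castLE hkm r)) u • e1 r))⁻¹
      * (x (u + ∑ r : Fin k, pairZ (q (Fin.castLE hkm r)) u • e2 r))⁻¹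

lemma isPoint_myY {n m k : ℕ} {K : Type*} [Field K] (hkm : k ≤ m)
    (q : Fin m → Fin n → ℤ) (e1 e2 : Fin k → Fin n → ℤ)
    (he1 : Compatible hkm q e1) (he2 : Compatible hkm q e2)
    (x : (Fin n → ℤ) → K) (hx : IsPoint q x) :
    IsPoint q (myY hkm q e1 e2 x) := by
  constructor
  · simp [myY, pairZ_zero', hx.1]
  · intro u v hu hv
    have hImg : ∀ (e : Fin k → Fin n → ℤ), Compatible hkm q e → ∀ w, InS q w →
        InS q (w + ∑ r, pairZ (q (Fin.castLE hkm r)) w • e r) := by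
      intro e he w hw
      exact InS_shift hkm q e he w hw _ (fun r => hw _) (fun s => le_refl _)
    have hvec : ∀ (e : Fin k → Fin n → ℤ),
        (u + v) + ∑ r, pairZ (q (Fin.castLE hkm r)) (u + v) • e r
          = (u + ∑ r, pairZ (q (Fin.castLE hkm r)) u • e r)
            + (v + ∑ r, pairZ (q (Fin.castLE hkm r)) v • e r) := by
      intro e
      have : ∑ r, pairZ (q (Fin.castLE hkm r)) (u + v) • e r
          = (∑ r, pairZ (q (Fin.castLE hkm r)) u • e r)
            + (∑ r, pairZ (q (Fin.castLE hkm r)) v • e r) := by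
        rw [sum_smul_add']
        exact Finset.sum_congr rfl fun r _ => by rw [pairZ_add']
      rw [this]; abel
    have hsgn : (∑ r : Fin k, (pairZ (q (Fin.castLE hkm r)) (u + v)).toNat)
        = (∑ r : Fin k, (pairZ (q (Fin.castLE hkm r)) u).toNat)
          + (∑ r : Fin k, (pairZ (q (Fin.castLE hkm r)) v).toNat) := by
      rw [← Finset.sum_add_distrib]
      refine Finset.sum_congr rfl fun r _ => ?_
      have h1 := hu (Fin.castLE hkm r)
      have h2 := hv (Fin.castLE hkm r)
      rw [pairZ_add']
      omega
    simp only [myY, hvec, hsgn, pow_add]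
    rw [hx.2 _ _ (hImg e1 he1 u hu) (hImg e1 he1 v hv),
        hx.2 _ _ (hImg e2 he2 u hu) (hImg e2 he2 v hv),
        hx.2 u v hu hv, mul_inv, mul_inv]
    ring

lemma rmul_xy {n m k : ℕ} {K : Type*} [Field K] [CharZero K]
    (hkm : k ≤ m)
    (q : Fin m → Fin n → ℤ) (e1 e2 : Fin k → Fin n → ℤ)
    (he1 : Compatible hkm q e1) (he2 : Compatible hkm q e2)
    (x : (Fin n → ℤ) → K) (hx : IsPoint q x)
    (hxne : ∀ u : Fin n → ℤ, InS q u →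
        (∀ r : Fin k, pairZ (q (Fin.castLE hkm r)) u = 0) → x u ≠ 0)
    (u : Fin n → ℤ) (hu : InS q u) :
    rmul hkm q e1 e2 x (myY hkm q e1 e2 x) u = xtau K hkm q u := by
  have hd0 : ∀ r : Fin k, 0 ≤ pairZ (q (Fin.castLE hkm r)) u := fun r => hu _
  rw [rmul]
  have hterm : ∀ i ∈ Fintype.piFinset (fun r : Fin k =>
      Finset.range ((pairZ (q (Fin.castLE hkm r)) u).toNat + 1)),
      (∏ r : Fin k, ((pairZ (q (Fin.castLE hkm r)) u).toNat.choose (i r) : K)) *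
        x (u + ∑ r : Fin k, (i r : ℤ) • e2 r) *
        myY hkm q e1 e2 x (u + ∑ r : Fin k, (pairZ (q (Fin.castLE hkm r)) u - (i r : ℤ)) • e1 r)
      = (x u * (x (u + ∑ r : Fin k, pairZ (q (Fin.castLE hkm r)) u • e1 r))⁻¹) *
        ∏ r : Fin k, (((pairZ (q (Fin.castLE hkm r)) u).toNat.choose (i r) : K) * (-1) ^ (i r)) := by
    intro i hi
    have hir : ∀ r, i r ≤ (pairZ (q (Fin.castLE hkm r)) u).toNat := by
      intro r
      have := (Fintype.mem_piFinset.mp hi) r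
      simp only [Finset.mem_range] at this
      omega
    have hpB : ∀ s : Fin k, pairZ (q (Fin.castLE hkm s))
        (u + ∑ r : Fin k, (pairZ (q (Fin.castLE hkm r)) u - (i r : ℤ)) • e1 r) = (i s : ℤ) := by
      intro s
      rw [pair_shift hkm q e1 he1]
      ring
    rw [myY]
    simp only [hpB, Int.toNat_natCast]
    -- now the two shifted points
    have hBP1 : (u + ∑ r : Fin k, (pairZ (q (Fin.castLE hkm r)) u - (i r : ℤ)) • e1 r)
        + ∑ r : Fin k, (i r : ℤ) • e1 r
        = u + ∑ r : Fin k, pairZ (q (Fin.castLE hkm r)) u • e1 r := by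
      rw [add_assoc, sum_smul_add']
      congr 1
      exact Finset.sum_congr rfl fun r _ => by rw [sub_add_cancel]
    rw [hBP1]
    -- memberships
    have hA : InS q (u + ∑ r : Fin k, (i r : ℤ) • e2 r) :=
      InS_shift hkm q e2 he2 u hu _ (fun r => by positivity) (fun s => by have := hir s; have := hd0 s; omega)
    have hB : InS q (u + ∑ r : Fin k, (pairZ (q (Fin.castLE hkm r)) u - (i r : ℤ)) • e1 r) :=
      InS_shift hkm q e1 he1 u hu _ (fun r => by have := hir r; have := hd0 r; omega)
        (fun s => by have := hir s; omega)
    have hC : InS q ((u + ∑ r : Fin k, (pairZ (q (Fin.castLE hkm r)) u - (i r : ℤ)) • e1 r)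
        + ∑ r : Fin k, (i r : ℤ) • e2 r) :=
      InS_shift hkm q e2 he2 _ hB _ (fun r => by positivity) (fun s => by rw [hpB s])
    have hCtau : ∀ s : Fin k, pairZ (q (Fin.castLE hkm s))
        ((u + ∑ r : Fin k, (pairZ (q (Fin.castLE hkm r)) u - (i r : ℤ)) • e1 r)
        + ∑ r : Fin k, (i r : ℤ) • e2 r) = 0 := by
      intro s
      rw [pair_shift hkm q e2 he2, hpB s, sub_self]
    have hCne : x ((u + ∑ r : Fin k, (pairZ (q (Fin.castLE hkm r)) u - (i r : ℤ)) • e1 r)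
        + ∑ r : Fin k, (i r : ℤ) • e2 r) ≠ 0 := hxne _ hC hCtau
    have hxAB : x (u + ∑ r : Fin k, (i r : ℤ) • e2 r) *
        x (u + ∑ r : Fin k, (pairZ (q (Fin.castLE hkm r)) u - (i r : ℤ)) • e1 r)
        = x u * x ((u + ∑ r : Fin k, (pairZ (q (Fin.castLE hkm r)) u - (i r : ℤ)) • e1 r)
          + ∑ r : Fin k, (i r : ℤ) • e2 r) := by
      rw [← hx.2 _ _ hA hB, ← hx.2 _ _ hu hC]
      congr 1
      abel
    have main : x (u + ∑ r : Fin k, (i r : ℤ) • e2 r) *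
        x (u + ∑ r : Fin k, (pairZ (q (Fin.castLE hkm r)) u - (i r : ℤ)) • e1 r) *
        (x ((u + ∑ r : Fin k, (pairZ (q (Fin.castLE hkm r)) u - (i r : ℤ)) • e1 r)
          + ∑ r : Fin k, (i r : ℤ) • e2 r))⁻¹ = x u := by
      rw [hxAB, mul_inv_cancel_right₀ hCne]
    rw [Finset.prod_mul_distrib, Finset.prod_pow_eq_pow_sum]
    linear_combination ((∏ r : Fin k, ((pairZ (q (Fin.castLE hkm r)) u).toNat.choose (i r) : K))
      * (-1 : K) ^ (∑ r : Fin k, i r)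
      * (x (u + ∑ r : Fin k, pairZ (q (Fin.castLE hkm r)) u • e1 r))⁻¹) * main
  rw [Finset.sum_congr rfl hterm, ← Finset.mul_sum, ← Finset.prod_univ_sum
    (fun r : Fin k => Finset.range ((pairZ (q (Fin.castLE hkm r)) u).toNat + 1))
    (fun (r : Fin k) (j : ℕ) => (((pairZ (q (Fin.castLE hkm r)) u).toNat.choose j : K) * (-1) ^ j))]
  rw [Finset.prod_congr rfl (fun r _ => alt_sum1 ((pairZ (q (Fin.castLE hkm r)) u).toNat))]
  by_cases hall : ∀ r : Fin k, pairZ (q (Fin.castLE hkm r)) u = 0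
  · have h1 : ∀ r ∈ Finset.univ, ((0 : K) ^ (pairZ (q (Fin.castLE hkm r)) u).toNat) = 1 :=
      fun r _ => by rw [hall r]; norm_num
    rw [Finset.prod_congr rfl h1, Finset.prod_const_one, mul_one]
    have hP1u : u + ∑ r : Fin k, pairZ (q (Fin.castLE hkm r)) u • e1 r = u := by
      rw [Finset.sum_eq_zero (fun r _ => by rw [hall r]; exact zero_smul _ _), add_zero]
    rw [hP1u, xtau, if_pos hall, mul_inv_cancel₀ (hxne u hu hall)]
  · obtain ⟨r0, hr0⟩ := not_forall.mp hall
    have hz : ((0 : K) ^ (pairZ (q (Fin.castLE hkm r0)) u).toNat) = 0 :=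
      zero_pow (by have := hd0 r0; omega)
    rw [Finset.prod_eq_zero (Finset.mem_univ r0) hz, mul_zero, xtau, if_neg hall]

lemma rmul_yx {n m k : ℕ} {K : Type*} [Field K] [CharZero K]
    (hkm : k ≤ m)
    (q : Fin m → Fin n → ℤ) (e1 e2 : Fin k → Fin n → ℤ)
    (he1 : Compatible hkm q e1) (he2 : Compatible hkm q e2)
    (x : (Fin n → ℤ) → K) (hx : IsPoint q x)
    (hxne : ∀ u : Fin n → ℤ, InS q u →
        (∀ r : Fin k, pairZ (q (Fin.castLE hkm r)) u = 0) → x u ≠ 0)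
    (u : Fin n → ℤ) (hu : InS q u) :
    rmul hkm q e1 e2 (myY hkm q e1 e2 x) x u = xtau K hkm q u := by
  have hd0 : ∀ r : Fin k, 0 ≤ pairZ (q (Fin.castLE hkm r)) u := fun r => hu _
  rw [rmul]
  have hterm : ∀ i ∈ Fintype.piFinset (fun r : Fin k =>
      Finset.range ((pairZ (q (Fin.castLE hkm r)) u).toNat + 1)),
      (∏ r : Fin k, ((pairZ (q (Fin.castLE hkm r)) u).toNat.choose (i r) : K)) *
        myY hkm q e1 e2 x (u + ∑ r : Fin k, (i r : ℤ) • e2 r) *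
        x (u + ∑ r : Fin k, (pairZ (q (Fin.castLE hkm r)) u - (i r : ℤ)) • e1 r)
      = (x u * (x (u + ∑ r : Fin k, pairZ (q (Fin.castLE hkm r)) u • e2 r))⁻¹) *
        ∏ r : Fin k, (((pairZ (q (Fin.castLE hkm r)) u).toNat.choose (i r) : K) *
          (-1) ^ ((pairZ (q (Fin.castLE hkm r)) u).toNat - i r)) := by
    intro i hi
    have hir : ∀ r, i r ≤ (pairZ (q (Fin.castLE hkm r)) u).toNat := by
      intro r
      have := (Fintype.mem_piFinset.mp hi) r
      simp only [Finset.mem_range] at this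
      omega
    have hpA : ∀ s : Fin k, pairZ (q (Fin.castLE hkm s))
        (u + ∑ r : Fin k, (i r : ℤ) • e2 r)
        = pairZ (q (Fin.castLE hkm s)) u - (i s : ℤ) :=
      fun s => pair_shift hkm q e2 he2 u _ s
    rw [myY]
    simp only [hpA]
    have hsgn : (∑ r : Fin k, (pairZ (q (Fin.castLE hkm r)) u - (i r : ℤ)).toNat)
        = ∑ r : Fin k, ((pairZ (q (Fin.castLE hkm r)) u).toNat - i r) := by
      refine Finset.sum_congr rfl fun r _ => ?_
      have := hd0 r; have := hir r; omega
    rw [hsgn]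
    have hAP2 : (u + ∑ r : Fin k, (i r : ℤ) • e2 r)
        + ∑ r : Fin k, (pairZ (q (Fin.castLE hkm r)) u - (i r : ℤ)) • e2 r
        = u + ∑ r : Fin k, pairZ (q (Fin.castLE hkm r)) u • e2 r := by
      rw [add_assoc, sum_smul_add']
      congr 1
      exact Finset.sum_congr rfl fun r _ => by
        rw [show (i r : ℤ) + (pairZ (q (Fin.castLE hkm r)) u - (i r : ℤ))
          = pairZ (q (Fin.castLE hkm r)) u from by ring]
    rw [hAP2]
    -- memberships
    have hA : InS q (u + ∑ r : Fin k, (i r : ℤ) • e2 r) :=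
      InS_shift hkm q e2 he2 u hu _ (fun r => by positivity)
        (fun s => by have := hir s; have := hd0 s; omega)
    have hB : InS q (u + ∑ r : Fin k, (pairZ (q (Fin.castLE hkm r)) u - (i r : ℤ)) • e1 r) :=
      InS_shift hkm q e1 he1 u hu _ (fun r => by have := hir r; have := hd0 r; omega)
        (fun s => by have := hir s; omega)
    have hC : InS q ((u + ∑ r : Fin k, (i r : ℤ) • e2 r)
        + ∑ r : Fin k, (pairZ (q (Fin.castLE hkm r)) u - (i r : ℤ)) • e1 r) :=
      InS_shift hkm q e1 he1 _ hA _
        (fun r => by have := hir r; have := hd0 r; omega)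
        (fun s => by rw [hpA s])
    have hCtau : ∀ s : Fin k, pairZ (q (Fin.castLE hkm s))
        ((u + ∑ r : Fin k, (i r : ℤ) • e2 r)
        + ∑ r : Fin k, (pairZ (q (Fin.castLE hkm r)) u - (i r : ℤ)) • e1 r) = 0 := by
      intro s
      rw [pair_shift hkm q e1 he1, hpA s]
      ring
    have hCne : x ((u + ∑ r : Fin k, (i r : ℤ) • e2 r)
        + ∑ r : Fin k, (pairZ (q (Fin.castLE hkm r)) u - (i r : ℤ)) • e1 r) ≠ 0 :=
      hxne _ hC hCtau
    have hxAB : x (u + ∑ r : Fin k, (i r : ℤ) • e2 r) *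
        x (u + ∑ r : Fin k, (pairZ (q (Fin.castLE hkm r)) u - (i r : ℤ)) • e1 r)
        = x u * x ((u + ∑ r : Fin k, (i r : ℤ) • e2 r)
          + ∑ r : Fin k, (pairZ (q (Fin.castLE hkm r)) u - (i r : ℤ)) • e1 r) := by
      rw [← hx.2 _ _ hA hB, ← hx.2 _ _ hu hC]
      congr 1
      abel
    have main : x (u + ∑ r : Fin k, (i r : ℤ) • e2 r) *
        x (u + ∑ r : Fin k, (pairZ (q (Fin.castLE hkm r)) u - (i r : ℤ)) • e1 r) *
        (x ((u + ∑ r : Fin k, (i r : ℤ) • e2 r)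
          + ∑ r : Fin k, (pairZ (q (Fin.castLE hkm r)) u - (i r : ℤ)) • e1 r))⁻¹ = x u := by
      rw [hxAB, mul_inv_cancel_right₀ hCne]
    rw [Finset.prod_mul_distrib, Finset.prod_pow_eq_pow_sum]
    linear_combination ((∏ r : Fin k, ((pairZ (q (Fin.castLE hkm r)) u).toNat.choose (i r) : K))
      * (-1 : K) ^ (∑ r : Fin k, ((pairZ (q (Fin.castLE hkm r)) u).toNat - i r))
      * (x (u + ∑ r : Fin k, pairZ (q (Fin.castLE hkm r)) u • e2 r))⁻¹) * main
  rw [Finset.sum_congr rfl hterm, ← Finset.mul_sum, ← Finset.prod_univ_sum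
    (fun r : Fin k => Finset.range ((pairZ (q (Fin.castLE hkm r)) u).toNat + 1))
    (fun (r : Fin k) (j : ℕ) => (((pairZ (q (Fin.castLE hkm r)) u).toNat.choose j : K) *
      (-1) ^ ((pairZ (q (Fin.castLE hkm r)) u).toNat - j)))]
  rw [Finset.prod_congr rfl (fun r _ => alt_sum2 ((pairZ (q (Fin.castLE hkm r)) u).toNat))]
  by_cases hall : ∀ r : Fin k, pairZ (q (Fin.castLE hkm r)) u = 0
  · have h1 : ∀ r ∈ Finset.univ, ((0 : K) ^ (pairZ (q (Fin.castLE hkm r)) u).toNat) = 1 :=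
      fun r _ => by rw [hall r]; norm_num
    rw [Finset.prod_congr rfl h1, Finset.prod_const_one, mul_one]
    have hP2u : u + ∑ r : Fin k, pairZ (q (Fin.castLE hkm r)) u • e2 r = u := by
      rw [Finset.sum_eq_zero (fun r _ => by rw [hall r]; exact zero_smul _ _), add_zero]
    rw [hP2u, xtau, if_pos hall, mul_inv_cancel₀ (hxne u hu hall)]
  · obtain ⟨r0, hr0⟩ := not_forall.mp hall
    have hz : ((0 : K) ^ (pairZ (q (Fin.castLE hkm r0)) u).toNat) = 0 :=
      zero_pow (by have := hd0 r0; omega)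
    rw [Finset.prod_eq_zero (Finset.mem_univ r0) hz, mul_zero, xtau, if_neg hall]

theorem statement_4 {n m k : ℕ} {K : Type*} [Field K] [CharZero K]
    (hn : 1 ≤ n) (hk : 1 ≤ k) (hkm : k ≤ m)
    (q : Fin m → Fin n → ℤ) (e1 e2 : Fin k → Fin n → ℤ)
    (he1 : Compatible hkm q e1) (he2 : Compatible hkm q e2)
    (hface : ∃ v : Fin n → ℤ, (∀ r : Fin k, pairZ (q (Fin.castLE hkm r)) v = 0) ∧
      ∀ j : Fin m, k ≤ (j : ℕ) → 0 < pairZ (q j) v)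
    (x : (Fin n → ℤ) → K) (hx : IsPoint q x) :
    (∃ y : (Fin n → ℤ) → K, IsPoint q y ∧ ∀ u : Fin n → ℤ, InS q u →
        rmul hkm q e1 e2 x y u = xtau K hkm q u ∧
        rmul hkm q e1 e2 y x u = xtau K hkm q u) ↔
    (∀ u : Fin n → ℤ, InS q u →
        (∀ r : Fin k, pairZ (q (Fin.castLE hkm r)) u = 0) → x u ≠ 0) := by

  constructor
  · rintro ⟨y, hy, hinv⟩ u hu h0
    have h := (hinv u hu).1
    have hpi : Fintype.piFinset (fun r : Fin k =>
        Finset.range ((pairZ (q (Fin.castLE hkm r)) u).toNat + 1)) = {fun _ => 0} := by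
      ext i
      simp [Fintype.mem_piFinset, h0, Nat.lt_one_iff, funext_iff]
    rw [rmul, hpi, Finset.sum_singleton] at h
    simp only [h0] at h
    simp [xtau, h0] at h
    exact left_ne_zero_of_mul_eq_one h
  · intro hxne
    exact ⟨myY hkm q e1 e2 x, isPoint_myY hkm q e1 e2 he1 he2 x hx,
      fun u hu => ⟨rmul_xy hkm q e1 e2 he1 he2 x hx hxne u hu,
        rmul_yx hkm q e1 e2 he1 he2 x hx hxne u hu⟩⟩
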